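/- Let $\alpha\in(0,1/2)$, $\gamma\in(1/2,1)$ with $\alpha+\gamma<1$, $\beta\in(0,1)$ with $\alpha-\beta+\gamma<0$, and let $\mathcal{A}>0$. Define $g:\mathbb{R}\to\mathbb{R}$ for $y\in(0,1/2)$ by $g(y) = \mathcal{A}\int_1^{1+y}(z-y)^{-1-\alpha}(z-1)^{-\beta}dz + \mathcal{A}\int_{1+y}^2 (1-(z-y-1)^\gamma)(z-1)^{-\beta}dz$ and $g(-y) = \mathcal{A}\int_1^2 (z-1)^{-\beta}dz - \mathcal{A}\int_1^2 (z+y-1)^\gamma (z-1)^{-\beta}dz$. Then there is $c = c(\alpha,\beta,\gamma,\mathcal{A}) > 0$ such that $g(y)-g(-y) \ge c\, y^{1-\beta+\gamma}$ for all $y\in(0,1/2)$. -/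
import Mathlib


open Real intervalIntegral MeasureTheory

theorem counterexample_source_asymmetry_lower_bound
    (α γ β A : ℝ)
    (hα : α ∈ Set.Ioo (0:ℝ) (1/2)) (hγ : γ ∈ Set.Ioo (1/2:ℝ) 1)
    (hαγ : α + γ < 1) (hβ : β ∈ Set.Ioo (0:ℝ) 1) (hαβγ : α - β + γ < 0)
    (hA : 0 < A) :
    ∃ c > (0:ℝ), ∀ y ∈ Set.Ioo (0:ℝ) (1/2),
      ((A * ∫ z in (1:ℝ)..(1 + y), (z - y) ^ (-(1 + α)) * (z - 1) ^ (-β)) +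
        A * ∫ z in (1 + y)..(2:ℝ), (1 - (z - y - 1) ^ γ) * (z - 1) ^ (-β)) -
      ((A * ∫ z in (1:ℝ)..(2:ℝ), (z - 1) ^ (-β)) -
        A * ∫ z in (1:ℝ)..(2:ℝ), (z + y - 1) ^ γ * (z - 1) ^ (-β))
      ≥ c * y ^ (1 - β + γ) := by
  obtain ⟨hα0, hα1⟩ := hα
  obtain ⟨hγ0, hγ1⟩ := hγ
  obtain ⟨hβ0, hβ1⟩ := hβ
  have hexp : (0:ℝ) < 1 - β + γ := by linarith
  have hγnn : (0:ℝ) ≤ γ := by linarith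
  refine ⟨A / (1 - β + γ), by positivity, ?_⟩
  rintro y ⟨hy0, hy2⟩
  -- integrability of the singular factor on any interval
  have hfint : ∀ a b : ℝ, IntervalIntegrable (fun z => (z - 1) ^ (-β)) volume a b := by
    intro a b
    have h := (intervalIntegrable_rpow' (show (-1:ℝ) < -β by linarith)
      (a := a - 1) (b := b - 1)).comp_sub_right 1
    simpa using h
  have hfnn : ∀ z : ℝ, 1 ≤ z → 0 ≤ (z - 1 : ℝ) ^ (-β) := fun z hz =>
    Real.rpow_nonneg (by linarith) _
  -- continuity helpers
  have hcont1 : ContinuousOn (fun z : ℝ => (z - y) ^ (-(1 + α))) (Set.uIcc 1 (1 + y)) := by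
    apply ContinuousOn.rpow_const (by fun_prop)
    intro z hz
    rw [Set.uIcc_of_le (by linarith)] at hz
    left
    have := hz.1
    intro h
    nlinarith
  have hcont2 : ∀ a b : ℝ, ContinuousOn (fun z : ℝ => (z + y - 1) ^ γ) (Set.uIcc a b) := by
    intro a b
    exact ContinuousOn.rpow_const (by fun_prop) (fun z _ => Or.inr hγnn)
  have hcont3 : ∀ a b : ℝ, ContinuousOn (fun z : ℝ => (z - y - 1) ^ γ) (Set.uIcc a b) := by
    intro a b
    exact ContinuousOn.rpow_const (by fun_prop) (fun z _ => Or.inr hγnn)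
  -- integrability of all products
  have hi1 : IntervalIntegrable (fun z => (z - y) ^ (-(1 + α)) * (z - 1) ^ (-β))
      volume 1 (1 + y) := (hfint 1 (1 + y)).continuousOn_mul hcont1
  have hiK : ∀ a b : ℝ, IntervalIntegrable (fun z => (z + y - 1) ^ γ * (z - 1) ^ (-β))
      volume a b := fun a b => (hfint a b).continuousOn_mul (hcont2 a b)
  have hiL : ∀ a b : ℝ, IntervalIntegrable (fun z => (z - y - 1) ^ γ * (z - 1) ^ (-β))
      volume a b := fun a b => (hfint a b).continuousOn_mul (hcont3 a b)
  -- split I3 and I4 at 1 + y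
  have hsplit3 : (∫ z in (1:ℝ)..(1 + y), (z - 1) ^ (-β)) +
      (∫ z in (1 + y)..(2:ℝ), (z - 1) ^ (-β)) = ∫ z in (1:ℝ)..(2:ℝ), (z - 1) ^ (-β) :=
    integral_add_adjacent_intervals (hfint 1 (1 + y)) (hfint (1 + y) 2)
  have hsplit4 : (∫ z in (1:ℝ)..(1 + y), (z + y - 1) ^ γ * (z - 1) ^ (-β)) +
      (∫ z in (1 + y)..(2:ℝ), (z + y - 1) ^ γ * (z - 1) ^ (-β)) =
      ∫ z in (1:ℝ)..(2:ℝ), (z + y - 1) ^ γ * (z - 1) ^ (-β) :=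
    integral_add_adjacent_intervals (hiK 1 (1 + y)) (hiK (1 + y) 2)
  -- rewrite I2
  have hI2 : (∫ z in (1 + y)..(2:ℝ), (1 - (z - y - 1) ^ γ) * (z - 1) ^ (-β)) =
      (∫ z in (1 + y)..(2:ℝ), (z - 1) ^ (-β)) -
      (∫ z in (1 + y)..(2:ℝ), (z - y - 1) ^ γ * (z - 1) ^ (-β)) := by
    rw [← integral_sub (hfint (1 + y) 2) (hiL (1 + y) 2)]
    congr 1
    funext z
    ring
  -- I1 ≥ J1
  have hI1 : (∫ z in (1:ℝ)..(1 + y), (z - 1) ^ (-β)) ≤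
      ∫ z in (1:ℝ)..(1 + y), (z - y) ^ (-(1 + α)) * (z - 1) ^ (-β) := by
    apply integral_mono_on (by linarith) (hfint 1 (1 + y)) hi1
    intro z hz
    have h1 : (0:ℝ) < z - y := by have := hz.1; linarith
    have h2 : z - y ≤ 1 := by have := hz.2; linarith
    have : 1 ≤ (z - y) ^ (-(1 + α)) :=
      Real.one_le_rpow_of_pos_of_le_one_of_nonpos h1 h2 (by linarith)
    exact le_mul_of_one_le_left (hfnn z hz.1) this
  -- K2 ≥ L
  have hKL : (∫ z in (1 + y)..(2:ℝ), (z - y - 1) ^ γ * (z - 1) ^ (-β)) ≤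
      ∫ z in (1 + y)..(2:ℝ), (z + y - 1) ^ γ * (z - 1) ^ (-β) := by
    apply integral_mono_on (by linarith) (hiL (1 + y) 2) (hiK (1 + y) 2)
    intro z hz
    have h1 : (0:ℝ) ≤ z - y - 1 := by have := hz.1; linarith
    exact mul_le_mul_of_nonneg_right
      (Real.rpow_le_rpow h1 (by linarith) hγnn)
      (hfnn z (by have := hz.1; linarith))
  -- K1 ≥ y ^ (1 - β + γ) / (1 - β + γ)
  have hK1 : y ^ (1 - β + γ) / (1 - β + γ) ≤
      ∫ z in (1:ℝ)..(1 + y), (z + y - 1) ^ γ * (z - 1) ^ (-β) := by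
    have hmono : (∫ z in (1:ℝ)..(1 + y), (z - 1) ^ (γ - β)) ≤
        ∫ z in (1:ℝ)..(1 + y), (z + y - 1) ^ γ * (z - 1) ^ (-β) := by
      apply integral_mono_ae_restrict (by linarith)
        ((intervalIntegrable_rpow' (show (-1:ℝ) < γ - β by linarith)
          (a := (0:ℝ)) (b := y)).comp_sub_right 1 |>.mono_set (by
            rw [Set.uIcc_of_le (by linarith : (1:ℝ) ≤ 1 + y),
              Set.uIcc_of_le (by linarith : (0:ℝ) + 1 ≤ y + 1)]
            intro x hx
            constructor <;> [linarith [hx.1]; linarith [hx.2]]))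
        (hiK 1 (1 + y))
      have hne : ∀ᵐ z ∂(volume.restrict (Set.Icc (1:ℝ) (1 + y))), z ≠ 1 :=
        ae_restrict_of_ae (by
          rw [MeasureTheory.ae_iff]
          have : {z : ℝ | ¬ z ≠ 1} = {1} := by ext z; simp
          rw [this]
          exact Real.volume_singleton)
      filter_upwards [ae_restrict_mem measurableSet_Icc, hne] with z hz hz1
      have h1 : (0:ℝ) < z - 1 := lt_of_le_of_ne (by linarith [hz.1]) (by
        intro h; exact hz1 (by linarith))
      have heq : (z - 1) ^ (γ - β) = (z - 1) ^ γ * (z - 1) ^ (-β) := by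
        rw [← Real.rpow_add h1]; ring_nf
      rw [heq]
      exact mul_le_mul_of_nonneg_right
        (Real.rpow_le_rpow h1.le (by linarith) hγnn)
        (Real.rpow_nonneg h1.le _)
    have hcomp : (∫ z in (1:ℝ)..(1 + y), (z - 1) ^ (γ - β)) =
        y ^ (1 - β + γ) / (1 - β + γ) := by
      have h1 : (∫ z in (1:ℝ)..(1 + y), (z - 1) ^ (γ - β)) =
          ∫ u in (0:ℝ)..y, u ^ (γ - β) := by
        have := integral_comp_sub_right (a := (1:ℝ)) (b := 1 + y)
          (fun u : ℝ => u ^ (γ - β)) 1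
        simpa using this
      rw [h1, integral_rpow (Or.inl (by linarith))]
      rw [Real.zero_rpow (by intro h; nlinarith)]
      rw [show γ - β + 1 = 1 - β + γ by ring]
      ring
    linarith
  -- conclude
  rw [hI2, ← hsplit3, ← hsplit4]
  have key : A * (y ^ (1 - β + γ) / (1 - β + γ)) = A / (1 - β + γ) * y ^ (1 - β + γ) := by
    ring
  nlinarith [mul_le_mul_of_nonneg_left hI1 hA.le, mul_le_mul_of_nonneg_left hKL hA.le,
    mul_le_mul_of_nonneg_left hK1 hA.le]
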